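/- arXiv:2110.00514 — 2 statements merged into one kernel-verified Lean document; each statement's English description precedes it below -/
import Mathlib

section
/- (Element-eigenvalue inequality of Fried.) Let ι be a finite index set and n a positive integer. For each E ∈ ι let K_E and M_E be real symmetric positive semidefinite n×n matrices and let λ_E ≥ 0 satisfy K_E ≼ λ_E M_E in the Loewner order. Set K = Σ_E K_E and M = Σ_E M_E, and assume M is positive definite. Then every generalized eigenvalue λ of the pencil (K, M), i.e. every λ ∈ ℝ for which there exists d ≠ 0 with K d = λ M d, satisfies λ ≤ max_{E∈ι} λ_E. -/
private lemma quad_sum {ι : Type*} {n : ℕ} (s : Finset ι)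
    (f : ι → Matrix (Fin n) (Fin n) ℝ) (d : Fin n → ℝ) :
    dotProduct d ((∑ E ∈ s, f E).mulVec d)
      = ∑ E ∈ s, dotProduct d ((f E).mulVec d) := by
  classical
  induction s using Finset.induction with
  | empty => simp
  | insert _ _ h ih =>
      simp [Finset.sum_insert h, Matrix.add_mulVec, dotProduct_add, ih]

/-- Element-eigenvalue inequality of Fried: if each element pair satisfies
`K_E ≼ lam_E • M_E` with `K_E, M_E` symmetric PSD, and the assembled global mass matrix
`M = ∑ M_E` is positive definite, then every generalized eigenvalue of the assembled
pencil `(∑ K_E, ∑ M_E)` is at most `max_E lam_E`. -/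
theorem stmt_2 {ι : Type*} [Fintype ι] [Nonempty ι] {n : ℕ} (hn : 0 < n)
    (Kel Mel : ι → Matrix (Fin n) (Fin n) ℝ) (lam : ι → ℝ)
    (hKsymm : ∀ E, (Kel E).IsSymm) (hMsymm : ∀ E, (Mel E).IsSymm)
    (hKpsd : ∀ E, (Kel E).PosSemidef) (hMpsd : ∀ E, (Mel E).PosSemidef)
    (hlam : ∀ E, 0 ≤ lam E)
    (hle : ∀ E, ∀ x : Fin n → ℝ,
      0 ≤ dotProduct x ((lam E • Mel E - Kel E).mulVec x))
    (K M : Matrix (Fin n) (Fin n) ℝ)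
    (hK : K = ∑ E, Kel E) (hM : M = ∑ E, Mel E)
    (hMpd : M.PosDef)
    (lam₀ : ℝ) (d : Fin n → ℝ) (hd : d ≠ 0)
    (heig : K.mulVec d = lam₀ • M.mulVec d) :
    lam₀ ≤ ⨆ E, lam E := by
  set L := ⨆ E, lam E with hL
  have hbdd : BddAbove (Set.range lam) := Set.Finite.bddAbove (Set.finite_range lam)
  have hlamL : ∀ E, lam E ≤ L := fun E => le_ciSup hbdd E
  have hMd : 0 < dotProduct d (M.mulVec d) := by simpa using hMpd.dotProduct_mulVec_pos hd
  -- dᵀ K d ≤ L * dᵀ M d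
  have hKd : dotProduct d (K.mulVec d) ≤ L * dotProduct d (M.mulVec d) := by
    have h1 : ∀ E, dotProduct d ((Kel E).mulVec d)
        ≤ lam E * dotProduct d ((Mel E).mulVec d) := by
      intro E
      have := hle E d
      rw [Matrix.sub_mulVec, dotProduct_sub, Matrix.smul_mulVec,
        dotProduct_smul, smul_eq_mul] at this
      linarith
    have h2 : ∀ E, lam E * dotProduct d ((Mel E).mulVec d)
        ≤ L * dotProduct d ((Mel E).mulVec d) := fun E =>
      mul_le_mul_of_nonneg_right (hlamL E) (by simpa using (hMpsd E).dotProduct_mulVec_nonneg d)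
    calc dotProduct d (K.mulVec d)
        = ∑ E, dotProduct d ((Kel E).mulVec d) := by
          rw [hK, quad_sum]
      _ ≤ ∑ E, L * dotProduct d ((Mel E).mulVec d) :=
          Finset.sum_le_sum fun E _ => (h1 E).trans (h2 E)
      _ = L * dotProduct d (M.mulVec d) := by
          rw [hM, quad_sum, Finset.mul_sum]
  have heq : dotProduct d (K.mulVec d) = lam₀ * dotProduct d (M.mulVec d) := by
    rw [heig, dotProduct_smul, smul_eq_mul]
  rw [heq] at hKd
  exact le_of_mul_le_mul_right (by linarith) hMd
end

section
/- Let ι be a finite nonempty index set and for each E ∈ ι let K_E, M_E be real symmetric positive semidefinite n×n matrices with λ_E ≥ 0 satisfying K_E ≼ λ_E M_E, let K = Σ_E K_E and M = Σ_E M_E with M positive definite, and set ω* = √(max_E λ_E). If λ > 0 is a generalized eigenvalue of (K, M) with associated frequency ω = √λ, then ω ≤ ω* and hence the conservative time step estimate satisfies 2/ω* ≤ 2/ω. In particular 2/ω* is a lower bound for the CFL-critical time step 2/ω_max, where ω_max is the square root of the largest generalized eigenvalue of (K, M). -/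
/-- Conservative critical time step estimate: with the element-wise Loewner bounds
`K_E ≼ lam_E • M_E` and `ω* = √(max_E lam_E)`, any positive generalized eigenvalue
`lam` of the assembled pencil with frequency `ω = √lam` satisfies `ω ≤ ω*` and
`2/ω* ≤ 2/ω`; in particular `2/ω*` is a lower bound for the CFL-critical time step
`2/ω_max`, where `ω_max` is the square root of the largest generalized eigenvalue. -/
theorem stmt_4 {ι : Type*} [Fintype ι] [Nonempty ι] {n : ℕ} (hn : 0 < n)
    (Kel Mel : ι → Matrix (Fin n) (Fin n) ℝ) (lamE : ι → ℝ)
    (hKsymm : ∀ E, (Kel E).IsSymm) (hMsymm : ∀ E, (Mel E).IsSymm)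
    (hKpsd : ∀ E, (Kel E).PosSemidef) (hMpsd : ∀ E, (Mel E).PosSemidef)
    (hlamE : ∀ E, 0 ≤ lamE E)
    (hle : ∀ E, ∀ x : Fin n → ℝ,
      0 ≤ dotProduct x ((lamE E • Mel E - Kel E).mulVec x))
    (K M : Matrix (Fin n) (Fin n) ℝ)
    (hK : K = ∑ E, Kel E) (hM : M = ∑ E, Mel E)
    (hMpd : M.PosDef)
    (ωstar : ℝ) (hωstar : ωstar = Real.sqrt (⨆ E, lamE E))
    (lam : ℝ) (hlampos : 0 < lam)
    (d : Fin n → ℝ) (hd : d ≠ 0)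
    (heig : K.mulVec d = lam • M.mulVec d)
    (ω : ℝ) (hω : ω = Real.sqrt lam) :
    ω ≤ ωstar ∧ 2 / ωstar ≤ 2 / ω ∧
      ∀ lamMax : ℝ,
        (∃ d₀ : Fin n → ℝ, d₀ ≠ 0 ∧ K.mulVec d₀ = lamMax • M.mulVec d₀) →
        (∀ μ : ℝ, (∃ d₁ : Fin n → ℝ, d₁ ≠ 0 ∧ K.mulVec d₁ = μ • M.mulVec d₁) →
          μ ≤ lamMax) →
        2 / ωstar ≤ 2 / Real.sqrt lamMax := by
  set L := ⨆ E, lamE E with hL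
  have hLle : ∀ E, lamE E ≤ L := fun E => le_ciSup (Set.Finite.bddAbove (Set.finite_range _)) E
  -- key: any generalized eigenvalue is ≤ L
  have key : ∀ (μ : ℝ) (d₀ : Fin n → ℝ), d₀ ≠ 0 → K.mulVec d₀ = μ • M.mulVec d₀ → μ ≤ L := by
    intro μ d₀ hd₀ heq
    have hq : 0 < dotProduct d₀ (M.mulVec d₀) := by
      have := hMpd.dotProduct_mulVec_pos hd₀
      simpa using this
    have hKle : dotProduct d₀ (K.mulVec d₀) ≤ L * dotProduct d₀ (M.mulVec d₀) := by
      have hsplit : ∀ (A : ι → Matrix (Fin n) (Fin n) ℝ),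
          dotProduct d₀ ((∑ E, A E).mulVec d₀)
            = ∑ E, dotProduct d₀ ((A E).mulVec d₀) := fun A => by
        exact map_sum (AddMonoidHom.mk' (fun B => dotProduct d₀ (B.mulVec d₀))
          (by intro X Y; simp [Matrix.add_mulVec, dotProduct_add])) A Finset.univ
      rw [hK, hM, hsplit, hsplit, Finset.mul_sum]
      apply Finset.sum_le_sum
      intro E _
      have h1 := hle E d₀
      have h2 : (0:ℝ) ≤ dotProduct d₀ ((Mel E).mulVec d₀) := by
        have := (hMpsd E).dotProduct_mulVec_nonneg d₀; simpa using this
      have h3 : dotProduct d₀ ((Kel E).mulVec d₀)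
          ≤ lamE E * dotProduct d₀ ((Mel E).mulVec d₀) := by
        have : 0 ≤ lamE E * dotProduct d₀ ((Mel E).mulVec d₀)
            - dotProduct d₀ ((Kel E).mulVec d₀) := by
          simpa [Matrix.sub_mulVec, Matrix.smul_mulVec, dotProduct_sub,
            dotProduct_smul, smul_eq_mul] using h1
        linarith
      calc dotProduct d₀ ((Kel E).mulVec d₀)
          ≤ lamE E * dotProduct d₀ ((Mel E).mulVec d₀) := h3
        _ ≤ L * dotProduct d₀ ((Mel E).mulVec d₀) :=
            mul_le_mul_of_nonneg_right (hLle E) h2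
    have hKeq : dotProduct d₀ (K.mulVec d₀) = μ * dotProduct d₀ (M.mulVec d₀) := by
      rw [heq]; simp [dotProduct_smul, smul_eq_mul]
    rw [hKeq] at hKle
    exact le_of_mul_le_mul_right hKle hq
  have hlamL : lam ≤ L := key lam d hd heig
  have hωpos : 0 < ω := by rw [hω]; exact Real.sqrt_pos.mpr hlampos
  have h1 : ω ≤ ωstar := by
    rw [hω, hωstar]; exact Real.sqrt_le_sqrt hlamL
  refine ⟨h1, ?_, ?_⟩
  · gcongr
  · intro lamMax ⟨d₀, hd₀, heq₀⟩ hmax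
    have hlamMaxpos : 0 < lamMax := lt_of_lt_of_le hlampos (hmax lam ⟨d, hd, heig⟩)
    have h2 : Real.sqrt lamMax ≤ ωstar := by
      rw [hωstar]; exact Real.sqrt_le_sqrt (key lamMax d₀ hd₀ heq₀)
    gcongr
end
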